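/- For a poset P, the Scott topology equals the weak Scott topology σ₂(P) if and only if for every directed subset D of P, the Scott closure of D equals D^δ, the set of lower bounds of the set of upper bounds of D. -/
import Mathlib


/-- For a poset `P`, the Scott topology equals the weak Scott topology `σ₂(P)` iff
for every directed subset `D`, the Scott closure of `D` equals
`D^δ = (D^↑)^↓`, the lower bounds of the upper bounds of `D`. -/
theorem stmt11 {P : Type} [PartialOrder P]
    (Tσ T₂ : TopologicalSpace P)
    (hσ : ∀ U : Set P, Tσ.IsOpen U ↔ (IsUpperSet U ∧
      ∀ D : Set P, D.Nonempty → DirectedOn (· ≤ ·) D →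
        ∀ a : P, IsLUB D a → a ∈ U → (D ∩ U).Nonempty))
    (h₂ : ∀ U : Set P, T₂.IsOpen U ↔ (IsUpperSet U ∧
      ∀ D : Set P, D.Nonempty → DirectedOn (· ≤ ·) D →
        (lowerBounds (upperBounds D) ∩ U).Nonempty → (D ∩ U).Nonempty)) :
    Tσ = T₂ ↔
      ∀ D : Set P, D.Nonempty → DirectedOn (· ≤ ·) D →
        @closure P Tσ D = lowerBounds (upperBounds D) := by
  -- every T₂-open set is Tσ-open
  have h21 : ∀ U, T₂.IsOpen U → Tσ.IsOpen U := by
    intro U hU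
    rw [h₂] at hU
    rw [hσ]
    exact ⟨hU.1, fun D hD hdir a ha haU => hU.2 D hD hdir ⟨a, ha.2, haU⟩⟩
  constructor
  · intro heq D hD hdir
    subst heq
    letI : TopologicalSpace P := Tσ
    -- D^δ is closed
    have hclosed : IsClosed (lowerBounds (upperBounds D)) := by
      rw [← isOpen_compl_iff]
      show Tσ.IsOpen _
      rw [h₂ (lowerBounds (upperBounds D))ᶜ]
      constructor
      · intro x y hxy hx hy
        exact hx fun u hu => le_trans hxy (hy hu)
      · intro E hE hEdir ⟨a, haδ, haU⟩
        by_contra hcon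
        rw [Set.not_nonempty_iff_eq_empty] at hcon
        have hsub : E ⊆ lowerBounds (upperBounds D) := by
          intro e he
          by_contra hne
          exact Set.eq_empty_iff_forall_notMem.1 hcon e ⟨he, hne⟩
        apply haU
        intro u hu
        exact haδ fun e he => (hsub he) hu
    apply subset_antisymm
    · exact hclosed.closure_subset_iff.2 fun d hd u hu => hu hd
    · intro x hx
      rw [mem_closure_iff]
      intro U hU hxU
      have h := (h₂ U).1 hU
      obtain ⟨d, hdD, hdU⟩ := h.2 D hD hdir ⟨x, hx, hxU⟩
      exact ⟨d, hdU, hdD⟩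
  · intro h
    apply TopologicalSpace.ext
    funext U
    apply propext
    constructor
    · intro hU
      have hU' := (hσ U).1 hU
      refine (h₂ U).2 ⟨hU'.1, fun D hD hdir ⟨x, hxδ, hxU⟩ => ?_⟩
      have hx : x ∈ @closure P Tσ D := by rw [h D hD hdir]; exact hxδ
      letI : TopologicalSpace P := Tσ
      have hopen : IsOpen U := (hσ U).2 hU'
      obtain ⟨d, hdU, hdD⟩ := mem_closure_iff.1 hx U hopen hxU
      exact ⟨d, hdD, hdU⟩
    · exact h21 U
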